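/- Let z: ℝ → ℝ and γ: ℝ → ℝ be such that z(x) = ψ(γ(x), ρ(x)) for piecewise constant γ taking values in [γ_min, γ_max] (0 < γ_min) and ρ: ℝ → [0,1]. Then the total variation of x ↦ f(γ(x), ρ(x)) satisfies TV(f(γ(·),ρ(·))) ≤ TV(z(·)) + (1/4)TV(γ(·)). -/

import Mathlib

open scoped NNReal ENNReal

lemma evar_add_le {α : Type*} [LinearOrder α] (f g : α → ℝ) (s : Set α) :
    eVariationOn (fun x => f x + g x) s ≤ eVariationOn f s + eVariationOn g s := by
  apply iSup_le
  rintro ⟨n, ⟨u, hu, us⟩⟩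
  calc ∑ i ∈ Finset.range n, edist (f (u (i+1)) + g (u (i+1))) (f (u i) + g (u i))
      ≤ ∑ i ∈ Finset.range n,
        (edist (f (u (i+1))) (f (u i)) + edist (g (u (i+1))) (g (u i))) :=
        Finset.sum_le_sum fun i _ => edist_add_add_le _ _ _ _
    _ = ∑ i ∈ Finset.range n, edist (f (u (i+1))) (f (u i))
        + ∑ i ∈ Finset.range n, edist (g (u (i+1))) (g (u i)) := Finset.sum_add_distrib
    _ ≤ eVariationOn f s + eVariationOn g s :=
        add_le_add (eVariationOn.sum_le (f := f) (n := n) hu us) (eVariationOn.sum_le (f := g) (n := n) hu us)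

/-- `TV(f(γ(·),ρ(·))) ≤ TV(z(·)) + (1/4)·TV(γ(·))`, where
`z(x) = ψ(γ(x), ρ(x))`. -/
theorem stmt_16 (γ ρ z : ℝ → ℝ) (γmin γmax : ℝ) (hγmin : 0 < γmin)
    (hγrange : ∀ x, γ x ∈ Set.Icc γmin γmax)
    (hρrange : ∀ x, ρ x ∈ Set.Icc (0:ℝ) 1)
    (hz : ∀ x, z x = Real.sign (1/2 - ρ x) *
      (γ x * ρ x * (1 - ρ x) - γ x * (1/2) * (1 - 1/2)))
    (hBVz : BoundedVariationOn z Set.univ)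
    (hBVγ : BoundedVariationOn γ Set.univ) :
    eVariationOn (fun x => γ x * ρ x * (1 - ρ x)) Set.univ ≤
      eVariationOn z Set.univ + (1 / 4) * eVariationOn γ Set.univ := by
  -- pointwise identity: f x = γ x / 4 - |z x|
  have key : ∀ x, γ x * ρ x * (1 - ρ x) = -|z x| + γ x / 4 := by
    intro x
    have hγ0 : 0 < γ x := lt_of_lt_of_le hγmin (hγrange x).1
    have hzx := hz x
    rcases lt_trichotomy (ρ x) (1/2) with h | h | h
    · rw [hzx, Real.sign_of_pos (by linarith)]
      have : |1 * (γ x * ρ x * (1 - ρ x) - γ x * (1/2) * (1 - 1/2))|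
          = -(γ x * ρ x * (1 - ρ x) - γ x / 4) := by
        rw [abs_of_nonpos]; · ring
        · nlinarith [sq_nonneg (1/2 - ρ x)]
      rw [this]; ring
    · rw [hzx, h]; norm_num; ring
    · rw [hzx, Real.sign_of_neg (by linarith)]
      have : |(-1) * (γ x * ρ x * (1 - ρ x) - γ x * (1/2) * (1 - 1/2))|
          = -(γ x * ρ x * (1 - ρ x) - γ x / 4) := by
        rw [abs_of_nonneg]; · ring
        · nlinarith [sq_nonneg (1/2 - ρ x)]
      rw [this]; ring
  have hcong : eVariationOn (fun x => γ x * ρ x * (1 - ρ x)) Set.univ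
      = eVariationOn (fun x => -|z x| + γ x / 4) Set.univ := by
    congr 1; funext x; exact key x
  rw [hcong]
  refine le_trans (evar_add_le (fun x => -|z x|) (fun x => γ x / 4) Set.univ) (add_le_add ?_ ?_)
  · -- eVariationOn (-|z|) ≤ eVariationOn z, via 1-Lipschitz map t ↦ -|t|
    have hL : LipschitzWith 1 (fun t : ℝ => -|t|) := by
      apply LipschitzWith.of_dist_le_mul
      intro x y
      rw [Real.dist_eq, Real.dist_eq]
      simp only [NNReal.coe_one, one_mul, neg_sub_neg]
      rw [abs_sub_comm]
      exact abs_abs_sub_abs_le_abs_sub x y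
    have h := LipschitzOnWith.comp_eVariationOn_le (hL.lipschitzOnWith)
      (g := z) (s := Set.univ) (Set.mapsTo_univ z Set.univ)
    simpa [Function.comp_def] using h
  · -- eVariationOn (γ/4) ≤ (1/4) * eVariationOn γ
    have hL : LipschitzWith (1/4 : ℝ≥0) (fun t : ℝ => t / 4) := by
      apply LipschitzWith.of_dist_le_mul
      intro x y
      rw [Real.dist_eq, Real.dist_eq]
      have : x / 4 - y / 4 = (1/4) * (x - y) := by ring
      rw [this, abs_mul, abs_of_nonneg (by norm_num : (0:ℝ) ≤ 1/4)]
      norm_num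
    have h := LipschitzOnWith.comp_eVariationOn_le (hL.lipschitzOnWith)
      (g := γ) (s := Set.univ) (Set.mapsTo_univ γ Set.univ)
    have h14 : ((1/4 : ℝ≥0) : ℝ≥0∞) = (1/4 : ℝ≥0∞) := by
      simp
    calc eVariationOn (fun x => γ x / 4) Set.univ
        ≤ ((1/4 : ℝ≥0) : ℝ≥0∞) * eVariationOn γ Set.univ := by
          simpa [Function.comp_def] using h
      _ = (1/4 : ℝ≥0∞) * eVariationOn γ Set.univ := by rw [h14]
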